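/- Let g : (0, 1/2] → (0, ∞) be continuous and define L(x) = ∫₀^x √(g(u)) du, assumed finite, with L strictly increasing. If x̃ : [0,1] → [0,1/2] is defined implicitly by L(x̃(s)) = s·L(1/2), then x̃ is differentiable on (0,1) and g(x̃(s))·(x̃'(s))² = L(1/2)² for all s ∈ (0,1), i.e., the protocol achieves constant excess-work rate and thus ∫₀^1 g(x̃(s)) x̃'(s)² ds = L(1/2)². -/

import Mathlib

open Real Set intervalIntegral

/-- Constant-thermodynamic-speed protocols are optimal: if `L(x) = ∫₀^x √g` is
strictly increasing and `x̃` is defined implicitly by `L(x̃(s)) = s·L(1/2)`, then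
`x̃` is differentiable on `(0,1)` with `g(x̃(s))·x̃'(s)² = L(1/2)²`, and hence
`∫₀^1 g(x̃(s)) x̃'(s)² ds = L(1/2)²`. -/
theorem constant_speed_optimal (g : ℝ → ℝ)
    (hg : ContinuousOn g (Ioc 0 (1/2)))
    (hgpos : ∀ u ∈ Ioc (0:ℝ) (1/2), 0 < g u)
    (L : ℝ → ℝ) (hL : ∀ x, L x = ∫ u in (0:ℝ)..x, Real.sqrt (g u))
    (hfin : IntervalIntegrable (fun u => Real.sqrt (g u)) MeasureTheory.volume 0 (1/2))
    (hmono : StrictMonoOn L (Icc 0 (1/2)))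
    (x : ℝ → ℝ) (hmap : ∀ s ∈ Icc (0:ℝ) 1, x s ∈ Icc (0:ℝ) (1/2))
    (himp : ∀ s ∈ Icc (0:ℝ) 1, L (x s) = s * L (1/2)) :
    (∀ s ∈ Ioo (0:ℝ) 1, DifferentiableAt ℝ x s ∧
      g (x s) * (deriv x s)^2 = (L (1/2))^2) ∧
    (∫ s in (0:ℝ)..1, g (x s) * (deriv x s)^2) = (L (1/2))^2 := by
  set C := L (1/2) with hCdef
  have h0mem : (0:ℝ) ∈ Icc (0:ℝ) (1/2) := by constructor <;> norm_num
  have h12mem : (1/2:ℝ) ∈ Icc (0:ℝ) (1/2) := by constructor <;> norm_num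
  have hL0 : L 0 = 0 := by rw [hL]; simp
  have hC : 0 < C := by
    have := hmono h0mem h12mem (by norm_num)
    rwa [hL0] at this
  -- membership of x s in the open interval for s in (0,1)
  have hxIoo : ∀ s ∈ Ioo (0:ℝ) 1, x s ∈ Ioo (0:ℝ) (1/2) := by
    intro s hs
    have hsI : s ∈ Icc (0:ℝ) 1 := ⟨hs.1.le, hs.2.le⟩
    have hxm := hmap s hsI
    have hLx := himp s hsI
    have h1 : x s ≠ 0 := by
      intro h
      rw [h, hL0] at hLx
      nlinarith [hs.1, hC]
    have h2 : x s ≠ 1/2 := by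
      intro h
      rw [h, ← hCdef] at hLx
      nlinarith [hs.2, hC]
    exact ⟨lt_of_le_of_ne hxm.1 (Ne.symm h1), lt_of_le_of_ne hxm.2 h2⟩
  -- x is strictly monotone on [0,1]
  have hmonoX : StrictMonoOn x (Icc 0 1) := by
    intro s hsI t htI hst
    by_contra hle
    push_neg at hle
    have := hmono.monotoneOn (hmap t htI) (hmap s hsI) hle
    rw [himp s hsI, himp t htI] at this
    nlinarith
  -- surjectivity onto (0, 1/2)
  have hsurj : Ioo (0:ℝ) (1/2) ⊆ x '' Ioo (0:ℝ) 1 := by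
    intro y hy
    have hyI : y ∈ Icc (0:ℝ) (1/2) := ⟨hy.1.le, hy.2.le⟩
    have h1 : 0 < L y := by have := hmono h0mem hyI hy.1; rwa [hL0] at this
    have h2 : L y < C := hmono hyI h12mem hy.2
    refine ⟨L y / C, ⟨div_pos h1 hC, (div_lt_one hC).2 h2⟩, ?_⟩
    have htI : L y / C ∈ Icc (0:ℝ) 1 :=
      ⟨(div_pos h1 hC).le, ((div_lt_one hC).2 h2).le⟩
    have := himp _ htI
    rw [div_mul_cancel₀ _ hC.ne'] at this
    exact hmono.injOn (hmap _ htI) hyI this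
  -- continuity of √g on (0,1/2)
  have hsq : ContinuousOn (fun u => Real.sqrt (g u)) (Ioo (0:ℝ) (1/2)) :=
    Real.continuous_sqrt.comp_continuousOn (hg.mono Ioo_subset_Ioc_self)
  -- derivative of L
  have hLfun : L = fun u => ∫ t in (0:ℝ)..u, Real.sqrt (g t) := funext hL
  have hLderiv : ∀ y ∈ Ioo (0:ℝ) (1/2), HasDerivAt L (Real.sqrt (g y)) y := by
    intro y hy
    rw [hLfun]
    refine intervalIntegral.integral_hasDerivAt_right
      (hfin.mono_set ?_)
      (hsq.stronglyMeasurableAtFilter isOpen_Ioo y hy)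
      (hsq.continuousAt (isOpen_Ioo.mem_nhds hy))
    rw [Set.uIcc_of_le hy.1.le, Set.uIcc_of_le (by norm_num : (0:ℝ) ≤ 1/2)]
    exact Icc_subset_Icc le_rfl hy.2.le
  -- main pointwise claim
  have main : ∀ s ∈ Ioo (0:ℝ) 1,
      HasDerivAt x (C / Real.sqrt (g (x s))) s := by
    intro s hs
    have hy := hxIoo s hs
    have hgy : 0 < g (x s) := hgpos _ (Ioo_subset_Ioc_self hy)
    have hsqpos : 0 < Real.sqrt (g (x s)) := Real.sqrt_pos.2 hgy
    -- continuity of x at s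
    have hcont : ContinuousAt x s := by
      refine (hmonoX.mono Ioo_subset_Icc_self).continuousAt_of_image_mem_nhds
        (isOpen_Ioo.mem_nhds hs) ?_
      exact Filter.mem_of_superset (isOpen_Ioo.mem_nhds hy) hsurj
    have hf : HasDerivAt (fun u => L u / C) (Real.sqrt (g (x s)) / C) (x s) :=
      (hLderiv _ hy).div_const C
    have hfg : ∀ᶠ t in nhds s, (fun u => L u / C) (x t) = t := by
      filter_upwards [isOpen_Ioo.mem_nhds hs] with t ht
      show L (x t) / C = t
      rw [himp t ⟨ht.1.le, ht.2.le⟩, mul_div_cancel_right₀ _ hC.ne']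
    have := HasDerivAt.of_local_left_inverse hcont hf
      (div_ne_zero hsqpos.ne' hC.ne') hfg
    rw [inv_div] at this
    exact this
  have ptwise : ∀ s ∈ Ioo (0:ℝ) 1, DifferentiableAt ℝ x s ∧
      g (x s) * (deriv x s)^2 = C^2 := by
    intro s hs
    have hd := main s hs
    have hgy : 0 < g (x s) := hgpos _ (Ioo_subset_Ioc_self (hxIoo s hs))
    have hsqpos : 0 < Real.sqrt (g (x s)) := Real.sqrt_pos.2 hgy
    refine ⟨hd.differentiableAt, ?_⟩
    rw [hd.deriv, div_pow, Real.sq_sqrt hgy.le]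
    field_simp
  refine ⟨ptwise, ?_⟩
  have hae : ∀ᵐ t ∂MeasureTheory.volume, t ∈ Set.uIoc (0:ℝ) 1 →
      g (x t) * (deriv x t)^2 = C^2 := by
    have h1 : (MeasureTheory.volume ({1} : Set ℝ)) = 0 := MeasureTheory.measure_singleton 1
    filter_upwards [MeasureTheory.measure_eq_zero_iff_ae_notMem.mp h1] with t ht htI
    rw [Set.uIoc_of_le (by norm_num : (0:ℝ) ≤ 1)] at htI
    have : t ∈ Ioo (0:ℝ) 1 := ⟨htI.1, lt_of_le_of_ne htI.2 ht⟩
    exact (ptwise t this).2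
  rw [intervalIntegral.integral_congr_ae hae]
  simp
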